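/- Let R₁₂ = R(ξ₁,ξ₂) be of the U(1)^{N−1}-invariant form and R₂₁ = P R(ξ₂,ξ₁) P, and assume the unitarity relation R₁₂ R₂₁ = I. Define 𝓕₁₂ = Σ_{1≤α₁≤α₂≤N} e^{(α₁α₁)}⊗e^{(α₂α₂)} + Σ_{1≤α₂<α₁≤N} (e^{(α₁α₁)}⊗e^{(α₂α₂)}) R₁₂, define 𝓕₂₁ = Σ_{1≤α₂≤α₁≤N} e^{(α₁α₁)}⊗e^{(α₂α₂)} + Σ_{1≤α₁<α₂≤N} (e^{(α₁α₁)}⊗e^{(α₂α₂)}) R₂₁, and let ℛ₁₂ be the diagonal matrix I⊗I + Σ_{i=1}^N (a_i(ξ₁,ξ₂) − 1) e^{(ii)}⊗e^{(ii)}. Then 𝓕₂₁ R₁₂ = ℛ₁₂ 𝓕₁₂. -/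

import Mathlib

open Matrix Kronecker

/-- The N×N matrix unit `e^{(ij)}`. -/
def matE (K : Type*) [Semiring K] {N : ℕ} (i j : Fin N) : Matrix (Fin N) (Fin N) K :=
  Matrix.single i j 1

/-- The `U(1)^{N-1}`-invariant R-matrix built from weights `a, b, c`. -/
def Rmat {K : Type*} [CommRing K] {N : ℕ} (a : Fin N → K) (b c : Fin N → Fin N → K) :
    Matrix (Fin N × Fin N) (Fin N × Fin N) K :=
  ∑ i, a i • (matE K i i ⊗ₖ matE K i i)
    + ∑ i, ∑ j, if i ≠ j then b i j • (matE K i i ⊗ₖ matE K j j)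
        + c i j • (matE K i j ⊗ₖ matE K j i) else 0

/-- The permutation (swap) operator `P` on `ℂ^N ⊗ ℂ^N`. -/
def Pswap (K : Type*) [Semiring K] (N : ℕ) :
    Matrix (Fin N × Fin N) (Fin N × Fin N) K :=
  Matrix.of fun p q => if p.1 = q.2 ∧ p.2 = q.1 then 1 else 0

lemma matE_mul {K : Type*} [CommRing K] {N : ℕ} (i j k l : Fin N) :
    matE K i j * matE K k l = if j = k then matE K i l else 0 := by
  unfold matE
  split
  · next h => subst h; simpa using Matrix.single_mul_single_same (i := i) (j := j) (c := (1:K)) l 1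
  · next h => exact Matrix.single_mul_single_of_ne (i := i) (j := j) (k := k) (c := (1:K)) h 1

/-- Product of two diagonal Kronecker units. -/
lemma D_mul_D {K : Type*} [CommRing K] {N : ℕ} (i j k l : Fin N) :
    (matE K i i ⊗ₖ matE K j j) * (matE K k k ⊗ₖ matE K l l)
      = if i = k ∧ j = l then matE K i i ⊗ₖ matE K j j else 0 := by
  rw [← Matrix.mul_kronecker_mul, matE_mul, matE_mul]
  by_cases h1 : i = k <;> by_cases h2 : j = l <;> simp [h1, h2]

lemma D_mul_E {K : Type*} [CommRing K] {N : ℕ} (p i j : Fin N) (h : i ≠ j) :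
    (matE K p p ⊗ₖ matE K p p) * (matE K i j ⊗ₖ matE K j i) = 0 := by
  rw [← Matrix.mul_kronecker_mul, matE_mul, matE_mul]
  by_cases h1 : p = i <;> by_cases h2 : p = j <;> simp_all

lemma Dpp_mul_R {K : Type*} [CommRing K] {N : ℕ} (a : Fin N → K) (b c : Fin N → Fin N → K)
    (p : Fin N) :
    (matE K p p ⊗ₖ matE K p p) * Rmat a b c = a p • (matE K p p ⊗ₖ matE K p p) := by
  unfold Rmat
  rw [mul_add, Finset.mul_sum, Finset.mul_sum]
  have h1 : ∀ i : Fin N, (matE K p p ⊗ₖ matE K p p) * (a i • (matE K i i ⊗ₖ matE K i i))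
      = if p = i then a p • (matE K p p ⊗ₖ matE K p p) else 0 := by
    intro i
    rw [Matrix.mul_smul, D_mul_D]
    by_cases h : p = i
    · subst h; simp
    · simp [h]
  have h2 : ∀ i : Fin N, (matE K p p ⊗ₖ matE K p p) *
      (∑ j, if i ≠ j then b i j • (matE K i i ⊗ₖ matE K j j)
        + c i j • (matE K i j ⊗ₖ matE K j i) else 0) = 0 := by
    intro i
    rw [Finset.mul_sum]
    refine Finset.sum_eq_zero fun j _ => ?_
    by_cases h : i = j
    · simp [h]
    · rw [if_pos h, mul_add, Matrix.mul_smul, Matrix.mul_smul, D_mul_D, D_mul_E p i j h]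
      have : ¬ (p = i ∧ p = j) := by rintro ⟨rfl, rfl⟩; exact h rfl
      simp [this]
  simp only [h1, h2]
  simp

lemma Rdiag_mul_D {K : Type*} [CommRing K] {N : ℕ} (a : Fin N → K) (p q : Fin N) :
    ((1 : Matrix (Fin N × Fin N) (Fin N × Fin N) K)
      + ∑ i, (a i - 1) • (matE K i i ⊗ₖ matE K i i)) * (matE K p p ⊗ₖ matE K q q)
    = if p = q then a p • (matE K p p ⊗ₖ matE K q q) else matE K p p ⊗ₖ matE K q q := by
  rw [add_mul, one_mul, Finset.sum_mul]
  have h : ∀ i : Fin N, ((a i - 1) • (matE K i i ⊗ₖ matE K i i)) * (matE K p p ⊗ₖ matE K q q)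
      = if i = p ∧ i = q then (a i - 1) • (matE K i i ⊗ₖ matE K i i) else 0 := by
    intro i
    rw [Matrix.smul_mul, D_mul_D]
    by_cases hc : i = p ∧ i = q
    · obtain ⟨rfl, h2⟩ := hc; simp [h2]
    · simp [hc]
  simp only [h]
  by_cases hpq : p = q
  · subst hpq
    simp only [and_self]
    rw [Finset.sum_ite_eq' Finset.univ p (fun i => (a i - 1) • (matE K i i ⊗ₖ matE K i i))]
    simp only [Finset.mem_univ, if_pos]
    rw [sub_smul, one_smul]
    abel
  · have : ∀ i : Fin N, ¬(i = p ∧ i = q) := by rintro i ⟨rfl, rfl⟩; exact hpq rfl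
    simp [this, hpq]

/-- The `L = 2` factorization condition for the F-matrix: `𝓕₂₁ R₁₂ = ℛ₁₂ 𝓕₁₂`, assuming
unitarity `R₁₂ R₂₁ = I`.  Here unprimed weights are at `(ξ₁,ξ₂)` and primed ones at
`(ξ₂,ξ₁)`; `R₂₁ = P R(ξ₂,ξ₁) P` and `ℛ₁₂ = I + Σ_i (a_i − 1) e^{(ii)}⊗e^{(ii)}`. -/
theorem stmt5 {K : Type*} [CommRing K] {N : ℕ}
    (a a' : Fin N → K) (b b' c c' : Fin N → Fin N → K)
    (huni : Rmat a b c * (Pswap K N * Rmat a' b' c' * Pswap K N) = 1) :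
    (∑ α₁ : Fin N, ∑ α₂ : Fin N,
        if α₂ ≤ α₁ then matE K α₁ α₁ ⊗ₖ matE K α₂ α₂
        else (matE K α₁ α₁ ⊗ₖ matE K α₂ α₂) * (Pswap K N * Rmat a' b' c' * Pswap K N))
      * Rmat a b c
    = ((1 : Matrix (Fin N × Fin N) (Fin N × Fin N) K)
        + ∑ i, (a i - 1) • (matE K i i ⊗ₖ matE K i i))
      * (∑ α₁ : Fin N, ∑ α₂ : Fin N,
          if α₁ ≤ α₂ then matE K α₁ α₁ ⊗ₖ matE K α₂ α₂
          else (matE K α₁ α₁ ⊗ₖ matE K α₂ α₂) * Rmat a b c) := by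
  have huni' : (Pswap K N * Rmat a' b' c' * Pswap K N) * Rmat a b c = 1 :=
    mul_eq_one_comm.mp huni
  trans (∑ p : Fin N, ∑ q : Fin N,
      if q < p then (matE K p p ⊗ₖ matE K q q) * Rmat a b c
      else if p < q then matE K p p ⊗ₖ matE K q q
      else a p • (matE K p p ⊗ₖ matE K p p))
  · rw [Finset.sum_mul]
    refine Finset.sum_congr rfl fun p _ => ?_
    rw [Finset.sum_mul]
    refine Finset.sum_congr rfl fun q _ => ?_
    rw [ite_mul]
    rcases lt_trichotomy p q with h | h | h
    · rw [if_neg (not_le.mpr h), mul_assoc, huni', mul_one,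
        if_neg (asymm h), if_pos h]
    · subst h
      rw [if_pos le_rfl, Dpp_mul_R, if_neg (lt_irrefl p), if_neg (lt_irrefl p)]
    · rw [if_pos h.le, if_pos h]
  · rw [Finset.mul_sum]
    refine Finset.sum_congr rfl fun p _ => ?_
    rw [Finset.mul_sum]
    refine Finset.sum_congr rfl fun q _ => ?_
    rw [mul_ite]
    rcases lt_trichotomy p q with h | h | h
    · rw [if_pos h.le, Rdiag_mul_D, if_neg h.ne, if_neg (asymm h), if_pos h]
    · subst h
      rw [if_pos le_rfl, Rdiag_mul_D, if_pos rfl, if_neg (lt_irrefl p), if_neg (lt_irrefl p)]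
    · rw [if_neg (not_le.mpr h), ← mul_assoc, Rdiag_mul_D, if_neg (Ne.symm h.ne), if_pos h]
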